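/- Hybrid lemma: Let A = (A_1,...,A_n), T (a random subset of [n]), B, and Z be jointly distributed discrete random variables, and let g map values of Z to subsets of [n]. Define ε = E_{z ← Z} E_{t ← T|z} [ I(A_t ; B | A_{g(z)}, Z=z) ] and δ = E_{z ← Z}[ SD( (A,B,T)|_{Z=z} , (A,B)|_{Z=z} × T|_{Z=z} ) ]. Then E_{z, a_{g(z)} ← Z, A_{g(z)}} [ SD( (A_T, T, B)|_{z,a_{g(z)}} , (A_T, T)|_{z,a_{g(z)}} × B|_{z,a_{g(z)}} ) ] ≤ 2√ε + 2δ. -/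

import Mathlib

open scoped BigOperators Classical

noncomputable section

variable {Ω : Type*} [Fintype Ω]

/-- Probability of an event under a mass function `μ`. -/
def prEv (μ : Ω → ℝ) (E : Ω → Prop) : ℝ := ∑ ω, if E ω then μ ω else 0

/-- Distribution (pmf) of a random variable. -/
def rvDist (μ : Ω → ℝ) {α : Type*} (X : Ω → α) : α → ℝ :=
  fun a => prEv μ (fun ω => X ω = a)

/-- Conditional distribution of `X` given the event `B = b`. -/
def condDist (μ : Ω → ℝ) {α β : Type*} (X : Ω → α) (B : Ω → β) (b : β) : α → ℝ :=
  fun a => prEv μ (fun ω => X ω = a ∧ B ω = b) / prEv μ (fun ω => B ω = b)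

/-- Product of two distributions. -/
def prodDist {α β : Type*} (P : α → ℝ) (Q : β → ℝ) : α × β → ℝ := fun p => P p.1 * Q p.2

/-- Statistical (total variation) distance between two distributions on a finite set. -/
def SD {α : Type*} [Fintype α] (P Q : α → ℝ) : ℝ := (1/2) * ∑ a, |P a - Q a|

/-- Shannon entropy (base 2) of a distribution, with the convention `0 · log(1/0) = 0`. -/
def H2 {α : Type*} [Fintype α] (P : α → ℝ) : ℝ :=
  ∑ a, if P a = 0 then 0 else P a * Real.logb 2 (1 / P a)

/-- Shannon entropy of a random variable. -/
def entRV (μ : Ω → ℝ) {α : Type*} [Fintype α] (X : Ω → α) : ℝ := H2 (rvDist μ X)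

/-- Conditional mutual information `I(A;B|C)` (in bits). -/
def condMI (μ : Ω → ℝ) {α β γ : Type*} [Fintype α] [Fintype β] [Fintype γ]
    (A : Ω → α) (B : Ω → β) (C : Ω → γ) : ℝ :=
  entRV μ (fun ω => (A ω, C ω)) + entRV μ (fun ω => (B ω, C ω))
    - entRV μ (fun ω => (A ω, B ω, C ω)) - entRV μ C

/-- The conditional probability measure given `Z = z`. -/
def condMeas (μ : Ω → ℝ) {ζ : Type*} (Z : Ω → ζ) (z : ζ) : Ω → ℝ :=
  fun ω => if Z ω = z then μ ω / prEv μ (fun ω' => Z ω' = z) else 0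

/-- `μ` is a probability mass function. -/
def IsPMF (μ : Ω → ℝ) : Prop := (∀ ω, 0 ≤ μ ω) ∧ ∑ ω, μ ω = 1

end

/-- Restriction of a tuple `a : Fin n → α` to a coordinate set `t`, encoded with `Option`. -/
noncomputable def restr {n : ℕ} {α : Type*} (t : Finset (Fin n)) (a : Fin n → α) :
    Fin n → Option α := fun i => if i ∈ t then some (a i) else none



-- ===================== auxiliary lemmas =====================
noncomputable section Aux
open Finset

variable {Ω : Type*} [Fintype Ω]

-- ### basic prEv lemmas
lemma prEv_congr (μ : Ω → ℝ) {E F : Ω → Prop} (h : ∀ ω, E ω ↔ F ω) :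
    prEv μ E = prEv μ F := by
  unfold prEv; exact Finset.sum_congr rfl fun ω _ => by rw [if_congr (h ω) rfl rfl]

lemma prEv_nonneg {μ : Ω → ℝ} (hμ : ∀ ω, 0 ≤ μ ω) (E : Ω → Prop) : 0 ≤ prEv μ E :=
  Finset.sum_nonneg fun ω _ => by split <;> simp [hμ ω]

lemma prEv_mono {μ : Ω → ℝ} (hμ : ∀ ω, 0 ≤ μ ω) {E F : Ω → Prop}
    (h : ∀ ω, E ω → F ω) : prEv μ E ≤ prEv μ F := by
  unfold prEv
  refine Finset.sum_le_sum fun ω _ => ?_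
  by_cases hE : E ω
  · simp [hE, h ω hE]
  · simp only [hE, if_false]; split <;> simp [hμ ω]

/-- splitting an event by the value of a random variable -/
lemma prEv_sum_fiber (μ : Ω → ℝ) {α : Type*} [Fintype α] (X : Ω → α) (E : Ω → Prop) :
    ∑ a : α, prEv μ (fun ω => X ω = a ∧ E ω) = prEv μ E := by
  unfold prEv
  rw [Finset.sum_comm]
  refine Finset.sum_congr rfl fun ω _ => ?_
  by_cases hE : E ω
  · simp [hE]
  · simp [hE]

lemma rvDist_nonneg {μ : Ω → ℝ} (hμ : ∀ ω, 0 ≤ μ ω) {α : Type*} (X : Ω → α) (a : α) :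
    0 ≤ rvDist μ X a := prEv_nonneg hμ _

lemma rvDist_sum {μ : Ω → ℝ} {α : Type*} [Fintype α] (X : Ω → α) :
    ∑ a : α, rvDist μ X a = ∑ ω, μ ω := by
  have := prEv_sum_fiber μ X (fun _ => True)
  simpa [prEv, rvDist] using this

lemma condDist_nonneg {μ : Ω → ℝ} (hμ : ∀ ω, 0 ≤ μ ω) {α β : Type*} (X : Ω → α)
    (B : Ω → β) (b : β) (a : α) : 0 ≤ condDist μ X B b a :=
  div_nonneg (prEv_nonneg hμ _) (prEv_nonneg hμ _)

lemma condDist_sum {μ : Ω → ℝ} {α β : Type*} [Fintype α] (X : Ω → α) (B : Ω → β) (b : β)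
    (hb : prEv μ (fun ω => B ω = b) ≠ 0) : ∑ a : α, condDist μ X B b a = 1 := by
  unfold condDist
  rw [← Finset.sum_div, prEv_sum_fiber, div_self hb]

lemma condDist_zero {μ : Ω → ℝ} {α β : Type*} (X : Ω → α) (B : Ω → β) (b : β)
    (hb : prEv μ (fun ω => B ω = b) = 0) : condDist μ X B b = fun _ => 0 := by
  funext a; unfold condDist; rw [hb, div_zero]

/-- the numerator of condDist is at most the denominator; useful with marginals -/
lemma condDist_le_one {μ : Ω → ℝ} (hμ : ∀ ω, 0 ≤ μ ω) {α β : Type*} (X : Ω → α)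
    (B : Ω → β) (b : β) (a : α) : condDist μ X B b a ≤ 1 := by
  unfold condDist
  rcases eq_or_ne (prEv μ (fun ω => B ω = b)) 0 with h | h
  · simp [h]
  · exact div_le_one_of_le₀ (prEv_mono hμ fun ω hw => hw.2)
      (prEv_nonneg hμ _)

-- ### pushforward
def push {α β : Type*} [Fintype α] (f : α → β) (P : α → ℝ) : β → ℝ :=
  fun b => ∑ a, if f a = b then P a else 0


lemma ite_sum {γ : Type*} {c : Prop} [Decidable c] {s : Finset γ} (f : γ → ℝ) :
    (if c then ∑ x ∈ s, f x else 0) = ∑ x ∈ s, if c then f x else 0 := by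
  split <;> simp

lemma ite_div' {c : Prop} [Decidable c] (x y : ℝ) :
    (if c then x / y else 0) = (if c then x else 0) / y := by
  split <;> simp

lemma sum_ite_eq_comp {α β : Type*} [Fintype α] (f : α → β) (b : β) (x : α) (r : ℝ) :
    (∑ a, if f a = b then (if x = a then r else 0) else 0) = if f x = b then r else 0 := by
  rw [Finset.sum_eq_single x]
  · simp
  · intro c _ hc
    simp [Ne.symm hc]
  · simp

lemma sum_push {α β : Type*} [Fintype α] [Fintype β] (f : α → β) (P : α → ℝ)
    (F : β → ℝ) : ∑ b, F b * push f P b = ∑ a, F (f a) * P a := by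
  unfold push
  simp_rw [Finset.mul_sum, mul_ite, mul_zero]
  rw [Finset.sum_comm]
  refine Finset.sum_congr rfl fun a _ => ?_
  rw [Finset.sum_ite_eq]
  simp

lemma rvDist_comp (μ : Ω → ℝ) {α β : Type*} [Fintype α] (X : Ω → α) (f : α → β) :
    rvDist μ (fun ω => f (X ω)) = push f (rvDist μ X) := by
  funext b
  unfold push rvDist prEv
  simp_rw [ite_sum]
  rw [Finset.sum_comm]
  exact Finset.sum_congr rfl fun ω _ => (sum_ite_eq_comp f b (X ω) (μ ω)).symm

lemma condDist_comp (μ : Ω → ℝ) {α β γ : Type*} [Fintype α] (X : Ω → α) (f : α → β)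
    (C : Ω → γ) (c : γ) :
    condDist μ (fun ω => f (X ω)) C c = push f (condDist μ X C c) := by
  funext b
  unfold push condDist
  simp_rw [ite_div']
  rw [← Finset.sum_div]
  congr 1
  unfold prEv
  simp_rw [ite_sum]
  rw [Finset.sum_comm]
  refine Finset.sum_congr rfl fun ω _ => ?_
  by_cases hc : C ω = c
  · simp only [hc, and_true]
    exact (sum_ite_eq_comp f b (X ω) (μ ω)).symm
  · simp [hc]

lemma SD_nonneg {α : Type*} [Fintype α] (P Q : α → ℝ) : 0 ≤ SD P Q := by
  unfold SD; positivity

lemma SD_triangle {α : Type*} [Fintype α] (P Q R : α → ℝ) :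
    SD P R ≤ SD P Q + SD Q R := by
  unfold SD
  rw [← mul_add, ← Finset.sum_add_distrib]
  gcongr (1/2) * ?_
  refine Finset.sum_le_sum fun a _ => ?_
  have := abs_sub_le (P a) (Q a) (R a)
  linarith

lemma SD_push {α β : Type*} [Fintype α] [Fintype β] (f : α → β) (P Q : α → ℝ) :
    SD (push f P) (push f Q) ≤ SD P Q := by
  unfold SD push
  gcongr (1/2) * ?_
  calc ∑ b, |(∑ a, if f a = b then P a else 0) - ∑ a, if f a = b then Q a else 0|
      = ∑ b, |∑ a, if f a = b then P a - Q a else 0| := by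
        refine Finset.sum_congr rfl fun b _ => ?_
        rw [← Finset.sum_sub_distrib]
        congr 1
        refine Finset.sum_congr rfl fun a _ => ?_
        split <;> simp
    _ ≤ ∑ b, ∑ a, |if f a = b then P a - Q a else 0| := by
        exact Finset.sum_le_sum fun b _ => Finset.abs_sum_le_sum_abs _ _
    _ = ∑ a, ∑ b, if f a = b then |P a - Q a| else 0 := by
        rw [Finset.sum_comm]
        refine Finset.sum_congr rfl fun a _ => Finset.sum_congr rfl fun b _ => ?_
        split <;> simp
    _ = ∑ a, |P a - Q a| := by
        refine Finset.sum_congr rfl fun a _ => ?_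
        rw [Finset.sum_ite_eq]; simp

lemma SD_prod_right {α β : Type*} [Fintype α] [Fintype β] (P Q : α → ℝ) (R : β → ℝ)
    (hR : ∀ b, 0 ≤ R b) (hR1 : ∑ b, R b ≤ 1) :
    SD (prodDist P R) (prodDist Q R) ≤ SD P Q := by
  unfold SD prodDist
  gcongr (1/2) * ?_
  rw [Fintype.sum_prod_type]
  calc ∑ a, ∑ b, |P a * R b - Q a * R b|
      = ∑ a, |P a - Q a| * ∑ b, R b := by
        refine Finset.sum_congr rfl fun a _ => ?_
        rw [Finset.mul_sum]
        refine Finset.sum_congr rfl fun b _ => ?_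
        rw [← sub_mul, abs_mul, abs_of_nonneg (hR b)]
    _ ≤ ∑ a, |P a - Q a| * 1 := by
        exact Finset.sum_le_sum fun a _ => by
          exact mul_le_mul_of_nonneg_left hR1 (abs_nonneg _)
    _ = ∑ a, |P a - Q a| := by simp

-- ### KL divergence and Pinsker
def KL2 {α : Type*} [Fintype α] (P Q : α → ℝ) : ℝ :=
  ∑ a, if P a = 0 then 0 else P a * Real.logb 2 (P a / Q a)

lemma log_ge_aux {x : ℝ} (hx : 0 < x) : 2 - 2 / Real.sqrt x ≤ Real.log x := by
  have hs : 0 < Real.sqrt x := Real.sqrt_pos.2 hx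
  have h1 : Real.log (Real.sqrt x)⁻¹ ≤ (Real.sqrt x)⁻¹ - 1 :=
    Real.log_le_sub_one_of_pos (inv_pos.2 hs)
  rw [Real.log_inv] at h1
  have h2 : 1 - (Real.sqrt x)⁻¹ ≤ Real.log (Real.sqrt x) := by linarith
  rw [Real.log_sqrt hx.le] at h2
  rw [inv_eq_one_div] at h2
  have := mul_le_mul_of_nonneg_left h2 (by norm_num : (0:ℝ) ≤ 2)
  calc 2 - 2 / Real.sqrt x = 2 * (1 - 1 / Real.sqrt x) := by ring
    _ ≤ 2 * (Real.log x / 2) := this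
    _ = Real.log x := by ring

/-- per-term Pinsker bound (in nats) -/
lemma pinsker_term {p q : ℝ} (hp : 0 ≤ p) (hq : 0 ≤ q) (hac : q = 0 → p = 0) :
    (p - q) + (p - q)^2 / (2 * (p + 2*q)) ≤
      (if p = 0 then 0 else p * Real.log (p / q)) := by
  rcases eq_or_lt_of_le hp with hp0 | hp0
  · -- p = 0
    rw [if_pos hp0.symm, ← hp0]
    rcases eq_or_lt_of_le hq with hq0 | hq0
    · rw [← hq0]; norm_num
    · have e : (0 - q)^2 / (2 * (0 + 2*q)) = q / 4 := by
        field_simp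
        ring
      rw [e]
      linarith
  · -- p > 0, hence q > 0
    have hq0 : 0 < q := by
      rcases eq_or_lt_of_le hq with h | h
      · exact absurd (hac h.symm) (ne_of_gt hp0)
      · exact h
    rw [if_neg (ne_of_gt hp0)]
    have hpq : 0 < p / q := by positivity
    have hlog := log_ge_aux hpq
    have hkey : 2 * p - 2 * Real.sqrt p * Real.sqrt q ≤ p * Real.log (p / q) := by
      have e1 : Real.sqrt (p / q) = Real.sqrt p / Real.sqrt q := Real.sqrt_div hp q
      have hsp : 0 < Real.sqrt p := Real.sqrt_pos.2 hp0
      have hsq : 0 < Real.sqrt q := Real.sqrt_pos.2 hq0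
      have e2 : p / Real.sqrt (p / q) = Real.sqrt p * Real.sqrt q := by
        have hpe : p = Real.sqrt p * Real.sqrt p := (Real.mul_self_sqrt hp).symm
        rw [e1, div_div_eq_mul_div]
        field_simp
        linear_combination (-1 : ℝ) * Real.mul_self_sqrt hp
      calc 2 * p - 2 * Real.sqrt p * Real.sqrt q
          = p * (2 - 2 / Real.sqrt (p/q)) := by
            rw [mul_sub]
            congr 1
            · ring
            · rw [mul_div_assoc', mul_comm p 2, mul_div_assoc, e2]; ring
        _ ≤ p * Real.log (p/q) := by
            exact mul_le_mul_of_nonneg_left hlog hp0.le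
    refine le_trans ?_ hkey
    have hsp := Real.sq_sqrt hp
    have hsq := Real.sq_sqrt hq
    have hspn := Real.sqrt_nonneg p
    have hsqn := Real.sqrt_nonneg q
    have key : (p - q)^2 = (Real.sqrt p - Real.sqrt q)^2 * (Real.sqrt p + Real.sqrt q)^2 := by
      rw [← mul_pow]
      congr 1
      nlinarith [hsp, hsq]
    have key2 : 2*(p + 2*q) - (Real.sqrt p + Real.sqrt q)^2
        = (Real.sqrt p - Real.sqrt q)^2 + 2*q := by
      nlinarith [hsp, hsq]
    have e3 : (Real.sqrt p - Real.sqrt q)^2 = p + q - 2 * Real.sqrt p * Real.sqrt q := by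
      nlinarith [hsp, hsq]
    have hD : (0:ℝ) < 2 * (p + 2*q) := by positivity
    have h3 : (p - q)^2 / (2 * (p + 2*q)) ≤ (Real.sqrt p - Real.sqrt q)^2 := by
      rw [div_le_iff₀ hD, key]
      nlinarith [key2, sq_nonneg (Real.sqrt p - Real.sqrt q), hq]
    linarith [h3, e3]

lemma ite_zero_div {c : Prop} [Decidable c] (x d : ℝ) :
    (if c then 0 else x / d) = (if c then 0 else x) / d := by
  split <;> simp

section PinskerSum
variable {α : Type*} [Fintype α] {P Q : α → ℝ}

lemma KLn_ge (hP : ∀ a, 0 ≤ P a) (hQ : ∀ a, 0 ≤ Q a)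
    (hPs : ∑ a, P a = 1) (hQs : ∑ a, Q a = 1) (hac : ∀ a, Q a = 0 → P a = 0) :
    ∑ a, (P a - Q a)^2 / (2 * (P a + 2 * Q a)) ≤
      ∑ a, (if P a = 0 then 0 else P a * Real.log (P a / Q a)) := by
  have h := Finset.sum_le_sum (s := (univ : Finset α))
    (fun a _ => pinsker_term (hP a) (hQ a) (hac a))
  rw [Finset.sum_add_distrib, Finset.sum_sub_distrib, hPs, hQs] at h
  linarith

lemma sq_sum_abs_le (hP : ∀ a, 0 ≤ P a) (hQ : ∀ a, 0 ≤ Q a)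
    (hPs : ∑ a, P a = 1) (hQs : ∑ a, Q a = 1) :
    (∑ a, |P a - Q a|)^2 ≤ 3 * ∑ a, (P a - Q a)^2 / (P a + 2 * Q a) := by
  classical
  set s : Finset α := univ.filter (fun a => 0 < P a + 2 * Q a) with hs
  have hmem : ∀ a ∈ s, 0 < P a + 2 * Q a := fun a ha => (Finset.mem_filter.1 ha).2
  have hoff : ∀ a ∈ (univ : Finset α), a ∉ s → |P a - Q a| = 0 := by
    intro a _ ha
    have h1 : ¬ (0 < P a + 2 * Q a) := by
      intro h; exact ha (Finset.mem_filter.2 ⟨Finset.mem_univ a, h⟩)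
    have h2 : P a = 0 ∧ Q a = 0 := by
      constructor <;> nlinarith [hP a, hQ a]
    rw [h2.1, h2.2]; simp
  have hX : ∑ a, |P a - Q a| = ∑ a ∈ s, |P a - Q a| :=
    (Finset.sum_subset (Finset.subset_univ s) (fun a h1 h2 => hoff a h1 h2)).symm
  have hsed := Finset.sq_sum_div_le_sum_sq_div s (fun a => |P a - Q a|)
      (g := fun a => P a + 2 * Q a) hmem
  have hadd : ∑ a ∈ s, (P a + 2 * Q a) ≤ 3 := by
    calc ∑ a ∈ s, (P a + 2 * Q a) ≤ ∑ a, (P a + 2 * Q a) := by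
          refine Finset.sum_le_sum_of_subset_of_nonneg (Finset.subset_univ s) ?_
          intro a _ _; have := hP a; have := hQ a; linarith
      _ = 3 := by rw [Finset.sum_add_distrib, hPs, ← Finset.mul_sum, hQs]; norm_num
  have habs : ∑ a ∈ s, |P a - Q a|^2 / (P a + 2 * Q a)
      = ∑ a ∈ s, (P a - Q a)^2 / (P a + 2 * Q a) := by
    refine Finset.sum_congr rfl fun a _ => ?_; rw [sq_abs]
  have hmono : ∑ a ∈ s, (P a - Q a)^2 / (P a + 2 * Q a)
      ≤ ∑ a, (P a - Q a)^2 / (P a + 2 * Q a) := by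
    refine Finset.sum_le_sum_of_subset_of_nonneg (Finset.subset_univ s) ?_
    intro a _ _
    rcases le_or_gt (P a + 2 * Q a) 0 with h | h
    · have h0 : P a + 2 * Q a = 0 := le_antisymm h (by nlinarith [hP a, hQ a])
      rw [h0, div_zero]
    · exact div_nonneg (sq_nonneg _) h.le
  rcases Finset.eq_empty_or_nonempty s with he | hne
  · rw [hX, he, Finset.sum_empty]
    have hss : (0:ℝ) ≤ ∑ a ∈ s, (P a - Q a)^2 / (P a + 2 * Q a) := by
      rw [he]; simp
    have : (0:ℝ) ≤ ∑ a, (P a - Q a)^2 / (P a + 2 * Q a) := le_trans hss hmono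
    nlinarith
  · have hDpos : 0 < ∑ a ∈ s, (P a + 2 * Q a) :=
      Finset.sum_pos hmem hne
    rw [hX]
    rw [div_le_iff₀ hDpos] at hsed
    calc (∑ a ∈ s, |P a - Q a|)^2
        ≤ (∑ a ∈ s, |P a - Q a|^2 / (P a + 2 * Q a)) * ∑ a ∈ s, (P a + 2 * Q a) := hsed
      _ ≤ (∑ a, (P a - Q a)^2 / (P a + 2 * Q a)) * 3 := by
          refine mul_le_mul (le_trans (le_of_eq habs) hmono) hadd (le_of_lt hDpos) ?_
          exact le_trans (Finset.sum_nonneg (fun a _ => div_nonneg (sq_nonneg _)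
            (by nlinarith [hP a, hQ a]))) hmono
      _ = 3 * ∑ a, (P a - Q a)^2 / (P a + 2 * Q a) := by ring

lemma KL2_eq_KLn (P Q : α → ℝ) :
    KL2 P Q = (∑ a, (if P a = 0 then 0 else P a * Real.log (P a / Q a))) / Real.log 2 := by
  unfold KL2
  rw [Finset.sum_div]
  refine Finset.sum_congr rfl fun a _ => ?_
  split
  · simp
  · rw [Real.logb]; ring

lemma KL2_nonneg' (hP : ∀ a, 0 ≤ P a) (hQ : ∀ a, 0 ≤ Q a)
    (hPs : ∑ a, P a = 1) (hQs : ∑ a, Q a = 1) (hac : ∀ a, Q a = 0 → P a = 0) :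
    0 ≤ KL2 P Q := by
  rw [KL2_eq_KLn]
  have h1 := KLn_ge hP hQ hPs hQs hac
  have h2 : (0:ℝ) ≤ ∑ a, (P a - Q a)^2 / (2 * (P a + 2 * Q a)) := by
    refine Finset.sum_nonneg fun a _ => div_nonneg (sq_nonneg _) ?_
    nlinarith [hP a, hQ a]
  have hl := Real.log_pos (by norm_num : (1:ℝ) < 2)
  exact div_nonneg (by linarith) hl.le

lemma pinsker (hP : ∀ a, 0 ≤ P a) (hQ : ∀ a, 0 ≤ Q a)
    (hPs : ∑ a, P a = 1) (hQs : ∑ a, Q a = 1) (hac : ∀ a, Q a = 0 → P a = 0) :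
    SD P Q ≤ 2 * Real.sqrt (KL2 P Q) := by
  have hKL0 := KL2_nonneg' hP hQ hPs hQs hac
  have hlog2pos := Real.log_pos (by norm_num : (1:ℝ) < 2)
  have hlog2le : Real.log 2 ≤ 1 := by
    have := Real.log_le_sub_one_of_pos (by norm_num : (0:ℝ) < 2)
    linarith
  -- SD^2 ≤ (3/2) * KLn
  have h1 := KLn_ge hP hQ hPs hQs hac
  have h2 := sq_sum_abs_le hP hQ hPs hQs
  have h3 : ∑ a, (P a - Q a)^2 / (P a + 2 * Q a)
      = 2 * ∑ a, (P a - Q a)^2 / (2 * (P a + 2 * Q a)) := by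
    rw [Finset.mul_sum]
    refine Finset.sum_congr rfl fun a _ => ?_
    rcases eq_or_ne (P a + 2 * Q a) 0 with h | h
    · rw [h]; simp
    · field_simp
  set KLn := ∑ a, (if P a = 0 then 0 else P a * Real.log (P a / Q a)) with hKLn
  have hsd : SD P Q = (∑ a, |P a - Q a|) / 2 := by unfold SD; ring
  have hsq : SD P Q ^ 2 ≤ (3/2) * KLn := by
    rw [hsd, div_pow]
    nlinarith [h1, h2, h3]
  have hKL2 : KLn ≤ KL2 P Q := by
    rw [KL2_eq_KLn, ← hKLn]
    have hKLn0 : 0 ≤ KLn := by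
      have h2' : (0:ℝ) ≤ ∑ a, (P a - Q a)^2 / (2 * (P a + 2 * Q a)) := by
        refine Finset.sum_nonneg fun a _ => div_nonneg (sq_nonneg _) ?_
        nlinarith [hP a, hQ a]
      linarith
    calc KLn = KLn / 1 := by ring
      _ ≤ KLn / Real.log 2 := div_le_div_of_nonneg_left hKLn0 hlog2pos hlog2le
  have hfinal : SD P Q ^ 2 ≤ 4 * KL2 P Q := by nlinarith
  have hsdnn : 0 ≤ SD P Q := SD_nonneg P Q
  calc SD P Q = Real.sqrt (SD P Q ^ 2) := (Real.sqrt_sq hsdnn).symm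
    _ ≤ Real.sqrt (4 * KL2 P Q) := Real.sqrt_le_sqrt hfinal
    _ = 2 * Real.sqrt (KL2 P Q) := by
        rw [Real.sqrt_mul (by norm_num : (0:ℝ) ≤ 4)]
        congr 1
        rw [show (4:ℝ) = 2^2 by norm_num, Real.sqrt_sq (by norm_num : (0:ℝ) ≤ 2)]

end PinskerSum

-- ### new material for the chain rule
lemma le_push {α β : Type*} [Fintype α] (f : α → β) (P : α → ℝ) (hP : ∀ a, 0 ≤ P a)
    (a : α) : P a ≤ push f P (f a) := by
  unfold push
  have := Finset.single_le_sum (f := fun a' => if f a' = f a then P a' else 0)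
    (fun a' _ => by by_cases h : f a' = f a <;> simp [h, hP a']) (Finset.mem_univ a)
  simpa using this

lemma push_nonneg {α β : Type*} [Fintype α] (f : α → β) (P : α → ℝ)
    (hP : ∀ a, 0 ≤ P a) (b : β) : 0 ≤ push f P b :=
  Finset.sum_nonneg fun a _ => by split <;> simp [hP a]

lemma H2_push {α β : Type*} [Fintype α] [Fintype β] (f : α → β) (P : α → ℝ)
    (hP : ∀ a, 0 ≤ P a) :
    H2 (push f P) = ∑ a, (if P a = 0 then 0 else
      P a * Real.logb 2 (1 / push f P (f a))) := by
  unfold H2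
  have step1 : ∀ y, (if push f P y = 0 then 0 else push f P y * Real.logb 2 (1 / push f P y))
      = (if push f P y = 0 then (0:ℝ) else Real.logb 2 (1 / push f P y)) * push f P y := by
    intro y; split <;> simp [mul_comm]
  simp_rw [step1]
  rw [sum_push f P (fun y => if push f P y = 0 then (0:ℝ) else Real.logb 2 (1 / push f P y))]
  refine Finset.sum_congr rfl fun a _ => ?_
  rcases eq_or_ne (P a) 0 with h | h
  · simp [h]
  · have hpos : 0 < P a := lt_of_le_of_ne (hP a) (Ne.symm h)
    have hpush : push f P (f a) ≠ 0 := by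
      have := le_push f P hP a
      intro h0; rw [h0] at this; linarith
    rw [if_neg h, if_neg hpush, mul_comm]

/-- The chain rule: conditional mutual information equals expected KL divergence. -/
lemma condMI_eq_KL {α β γ : Type*} [Fintype α] [Fintype β] [Fintype γ]
    (μ : Ω → ℝ) (hμ0 : ∀ ω, 0 ≤ μ ω) (X : Ω → α) (B : Ω → β) (C : Ω → γ) :
    condMI μ X B C = ∑ c, rvDist μ C c *
      KL2 (condDist μ (fun ω => (X ω, B ω)) C c)
          (prodDist (condDist μ X C c) (condDist μ B C c)) := by
  classical
  set p : α × β × γ → ℝ := rvDist μ (fun ω => (X ω, B ω, C ω)) with hpdef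
  have hp : ∀ v, 0 ≤ p v := fun v => rvDist_nonneg hμ0 _ v
  set f1 : α × β × γ → α × γ := fun v => (v.1, v.2.2) with hf1
  set f2 : α × β × γ → β × γ := fun v => (v.2.1, v.2.2) with hf2
  set f3 : α × β × γ → γ := fun v => v.2.2 with hf3
  have e1 : rvDist μ (fun ω => (X ω, C ω)) = push f1 p := by
    rw [hpdef, ← rvDist_comp μ (fun ω => (X ω, B ω, C ω)) f1]
  have e2 : rvDist μ (fun ω => (B ω, C ω)) = push f2 p := by
    rw [hpdef, ← rvDist_comp μ (fun ω => (X ω, B ω, C ω)) f2]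
  have e3 : rvDist μ C = push f3 p := by
    rw [hpdef, ← rvDist_comp μ (fun ω => (X ω, B ω, C ω)) f3]
  -- marginal value facts
  have hm1 : ∀ v, p v ≤ push f1 p (f1 v) := le_push f1 p hp
  have hm2 : ∀ v, p v ≤ push f2 p (f2 v) := le_push f2 p hp
  have hm3 : ∀ v, p v ≤ push f3 p (f3 v) := le_push f3 p hp
  -- LHS as a single sum
  have hLHS : condMI μ X B C = ∑ v, (if p v = 0 then 0 else p v *
      (Real.logb 2 (1 / push f1 p (f1 v)) + Real.logb 2 (1 / push f2 p (f2 v))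
        - Real.logb 2 (1 / p v) - Real.logb 2 (1 / push f3 p (f3 v)))) := by
    unfold condMI entRV
    rw [e1, e2, e3, H2_push f1 p hp, H2_push f2 p hp, H2_push f3 p hp]
    have : rvDist μ (fun ω => (X ω, B ω, C ω)) = p := hpdef.symm
    rw [this]
    unfold H2
    rw [← Finset.sum_add_distrib, ← Finset.sum_sub_distrib, ← Finset.sum_sub_distrib]
    refine Finset.sum_congr rfl fun v _ => ?_
    rcases eq_or_ne (p v) 0 with h | h
    · simp [h]
    · simp only [if_neg h]
      ring
  rw [hLHS]
  -- RHS rearrangement: turn ∑ c ∑ (x,b) into ∑ v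
  have hnum : ∀ x b c, prEv μ (fun ω => (X ω, B ω) = (x, b) ∧ C ω = c) = p (x, b, c) := by
    intro x b c
    rw [hpdef]
    exact prEv_congr μ (fun ω => by simp [Prod.ext_iff, and_assoc])
  have hnumX : ∀ x (c : γ), prEv μ (fun ω => X ω = x ∧ C ω = c)
      = push f1 p (x, c) := by
    intro x c
    rw [← e1]
    exact prEv_congr μ (fun ω => by simp [Prod.ext_iff])
  have hnumB : ∀ b (c : γ), prEv μ (fun ω => B ω = b ∧ C ω = c)
      = push f2 p (b, c) := by
    intro b c
    rw [← e2]
    exact prEv_congr μ (fun ω => by simp [Prod.ext_iff])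
  have hRHS : ∀ c : γ, rvDist μ C c *
      KL2 (condDist μ (fun ω => (X ω, B ω)) C c)
          (prodDist (condDist μ X C c) (condDist μ B C c))
      = ∑ x, ∑ b, (if p (x, b, c) = 0 then 0 else p (x, b, c) *
          Real.logb 2 (p (x, b, c) * push f3 p c / (push f1 p (x, c) * push f2 p (b, c)))) := by
    intro c
    unfold KL2
    rw [Finset.mul_sum, Fintype.sum_prod_type]
    refine Finset.sum_congr rfl fun x _ => ?_
    refine Finset.sum_congr rfl fun b _ => ?_
    have hcd : condDist μ (fun ω => (X ω, B ω)) C c (x, b)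
        = p (x, b, c) / rvDist μ C c := by
      unfold condDist
      rw [hnum]
      rfl
    have hcdX : condDist μ X C c x = push f1 p (x, c) / rvDist μ C c := by
      unfold condDist
      rw [hnumX]
      rfl
    have hcdB : condDist μ B C c b = push f2 p (b, c) / rvDist μ C c := by
      unfold condDist
      rw [hnumB]
      rfl
    rw [← e3]
    rcases eq_or_ne (rvDist μ C c) 0 with hc0 | hc0
    · have h1 : p (x, b, c) ≤ rvDist μ C c := by
        have := hm3 (x, b, c)
        rw [← e3] at this
        exact this
      have hpv : p (x, b, c) = 0 := le_antisymm (by rw [← hc0]; exact h1) (hp _)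
      rw [hc0, hpv]
      simp
    · have hcpos : 0 < rvDist μ C c := lt_of_le_of_ne (rvDist_nonneg hμ0 C c) (Ne.symm hc0)
      rcases eq_or_ne (p (x, b, c)) 0 with hv0 | hv0
      · rw [if_pos hv0, hcd, hv0]
        simp
      · have hvpos : 0 < p (x, b, c) := lt_of_le_of_ne (hp _) (Ne.symm hv0)
        have h1pos : 0 < push f1 p (x, c) := lt_of_lt_of_le hvpos (hm1 (x, b, c))
        have h2pos : 0 < push f2 p (b, c) := lt_of_lt_of_le hvpos (hm2 (x, b, c))
        have hcdne : condDist μ (fun ω => (X ω, B ω)) C c (x, b) ≠ 0 := by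
          rw [hcd]
          exact div_ne_zero hv0 hc0
        rw [if_neg hcdne, if_neg hv0, hcd]
        have hprod : prodDist (condDist μ X C c) (condDist μ B C c) (x, b)
            = (push f1 p (x, c) / rvDist μ C c) * (push f2 p (b, c) / rvDist μ C c) := by
          unfold prodDist
          rw [hcdX, hcdB]
        rw [hprod]
        have harg : (p (x, b, c) / rvDist μ C c) /
            ((push f1 p (x, c) / rvDist μ C c) * (push f2 p (b, c) / rvDist μ C c))
            = p (x, b, c) * rvDist μ C c / (push f1 p (x, c) * push f2 p (b, c)) := by
          field_simp
        rw [harg]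
        field_simp
  have hR : (∑ c, rvDist μ C c *
      KL2 (condDist μ (fun ω => (X ω, B ω)) C c)
          (prodDist (condDist μ X C c) (condDist μ B C c)))
      = ∑ c, ∑ x, ∑ b, (if p (x, b, c) = 0 then 0 else p (x, b, c) *
          Real.logb 2 (p (x, b, c) * push f3 p c / (push f1 p (x, c) * push f2 p (b, c)))) :=
    Finset.sum_congr rfl fun c _ => hRHS c
  rw [hR]
  -- reindex the LHS triple sum and match termwise
  simp only [Fintype.sum_prod_type]
  -- now LHS = ∑ x ∑ b ∑ c; RHS = ∑ c ∑ x ∑ b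
  rw [show (∑ c, ∑ x, ∑ b, (if p (x, b, c) = 0 then 0 else p (x, b, c) *
          Real.logb 2 (p (x, b, c) * push f3 p c / (push f1 p (x, c) * push f2 p (b, c)))))
      = ∑ x, ∑ b, ∑ c, (if p (x, b, c) = 0 then 0 else p (x, b, c) *
          Real.logb 2 (p (x, b, c) * push f3 p c / (push f1 p (x, c) * push f2 p (b, c))))
      from by
        rw [Finset.sum_comm]
        exact Finset.sum_congr rfl fun x _ => Finset.sum_comm]
  refine Finset.sum_congr rfl fun x _ => Finset.sum_congr rfl fun b _ =>
    Finset.sum_congr rfl fun c _ => ?_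
  rcases eq_or_ne (p (x, b, c)) 0 with hv0 | hv0
  · rw [if_pos hv0, if_pos hv0]
  · have hvpos : 0 < p (x, b, c) := lt_of_le_of_ne (hp _) (Ne.symm hv0)
    have h1pos : 0 < push f1 p (x, c) := lt_of_lt_of_le hvpos (hm1 (x, b, c))
    have h2pos : 0 < push f2 p (b, c) := lt_of_lt_of_le hvpos (hm2 (x, b, c))
    have h3pos : 0 < push f3 p c := lt_of_lt_of_le hvpos (hm3 (x, b, c))
    rw [if_neg hv0, if_neg hv0]
    congr 1
    rw [one_div, one_div, one_div, one_div, Real.logb_inv, Real.logb_inv,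
      Real.logb_inv, Real.logb_inv]
    rw [Real.logb_div (mul_ne_zero hv0 (ne_of_gt h3pos))
      (mul_ne_zero (ne_of_gt h1pos) (ne_of_gt h2pos)),
      Real.logb_mul hv0 (ne_of_gt h3pos),
      Real.logb_mul (ne_of_gt h1pos) (ne_of_gt h2pos)]
    ring


-- ### conditional measure lemmas
section CondMeas
variable {ζ : Type*} (μ : Ω → ℝ) (Z : Ω → ζ) (z : ζ)

lemma condMeas_nonneg (hμ : ∀ ω, 0 ≤ μ ω) : ∀ ω, 0 ≤ condMeas μ Z z ω := by
  intro ω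
  unfold condMeas
  split
  · exact div_nonneg (hμ ω) (prEv_nonneg hμ _)
  · exact le_refl 0

lemma prEv_condMeas (E : Ω → Prop) :
    prEv (condMeas μ Z z) E
      = prEv μ (fun ω => E ω ∧ Z ω = z) / prEv μ (fun ω => Z ω = z) := by
  unfold prEv condMeas
  rw [Finset.sum_div]
  refine Finset.sum_congr rfl fun ω _ => ?_
  by_cases hE : E ω <;> by_cases hz : Z ω = z <;> simp [hE, hz, prEv]

lemma rvDist_condMeas {α : Type*} (X : Ω → α) :
    rvDist (condMeas μ Z z) X = condDist μ X Z z := by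
  funext a
  unfold rvDist condDist
  exact prEv_condMeas μ Z z _

lemma condMeas_isPMF (hμ : IsPMF μ) (hz : prEv μ (fun ω => Z ω = z) ≠ 0) :
    IsPMF (condMeas μ Z z) := by
  constructor
  · exact condMeas_nonneg μ Z z hμ.1
  · have h1 : ∑ ω, condMeas μ Z z ω = prEv (condMeas μ Z z) (fun _ => True) := by
      unfold prEv; simp
    rw [h1, prEv_condMeas]
    rw [prEv_congr μ (show ∀ ω, (True ∧ Z ω = z) ↔ Z ω = z by intro ω; simp)]
    exact div_self hz

lemma prEv_eq_zero {μ : Ω → ℝ} (hμ : ∀ ω, 0 ≤ μ ω) {E F : Ω → Prop}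
    (h : ∀ ω, E ω → F ω) (hF : prEv μ F = 0) : prEv μ E = 0 :=
  le_antisymm (hF ▸ prEv_mono hμ h) (prEv_nonneg hμ E)

lemma condDist_condMeas {α η : Type*} (hμ : ∀ ω, 0 ≤ μ ω) (X : Ω → α) (W : Ω → η) (w : η) :
    condDist (condMeas μ Z z) X W w = fun a =>
      prEv μ (fun ω => X ω = a ∧ W ω = w ∧ Z ω = z)
        / prEv μ (fun ω => W ω = w ∧ Z ω = z) := by
  funext a
  unfold condDist
  rw [prEv_condMeas, prEv_condMeas]
  rw [prEv_congr μ (show ∀ ω, ((X ω = a ∧ W ω = w) ∧ Z ω = z) ↔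
    (X ω = a ∧ W ω = w ∧ Z ω = z) by intro ω; tauto)]
  rcases eq_or_ne (prEv μ (fun ω => Z ω = z)) 0 with h0 | h0
  · have hn : prEv μ (fun ω => X ω = a ∧ W ω = w ∧ Z ω = z) = 0 :=
      prEv_eq_zero hμ (fun ω hw => hw.2.2) h0
    have hd : prEv μ (fun ω => W ω = w ∧ Z ω = z) = 0 :=
      prEv_eq_zero hμ (fun ω hw => hw.2) h0
    rw [hn, hd]
    simp
  · rcases eq_or_ne (prEv μ (fun ω => W ω = w ∧ Z ω = z)) 0 with hb | hb
    · rw [hb]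
      simp
    · field_simp

lemma rvDist_pair {η : Type*} (hμ : ∀ ω, 0 ≤ μ ω) (W : Ω → η) (w : η) :
    rvDist μ (fun ω => (Z ω, W ω)) (z, w)
      = rvDist μ Z z * rvDist (condMeas μ Z z) W w := by
  rw [rvDist_condMeas]
  unfold rvDist condDist
  rw [prEv_congr μ (show ∀ ω, ((Z ω, W ω) = (z, w)) ↔ (W ω = w ∧ Z ω = z) by
    intro ω; rw [Prod.ext_iff]; tauto)]
  rcases eq_or_ne (prEv μ (fun ω => Z ω = z)) 0 with h0 | h0
  · rw [prEv_eq_zero hμ (fun ω hw => hw.2) h0, h0]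
    simp
  · rw [mul_div_cancel₀ _ h0]

end CondMeas

-- ### hybrid helpers
section Hybrid
open Finset

lemma SD_comm {α : Type*} [Fintype α] (P Q : α → ℝ) : SD P Q = SD Q P := by
  unfold SD
  congr 1
  exact Finset.sum_congr rfl fun a _ => abs_sub_comm _ _

lemma condDist_sum_le_one {μ : Ω → ℝ} (hμ : ∀ ω, 0 ≤ μ ω) {α β : Type*} [Fintype α]
    (X : Ω → α) (C : Ω → β) (c : β) : ∑ a, condDist μ X C c a ≤ 1 := by
  rcases eq_or_ne (prEv μ (fun ω => C ω = c)) 0 with h | h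
  · rw [condDist_zero X C c h]
    simp
  · rw [condDist_sum X C c h]

lemma div_le_div_nonneg_den {a b c : ℝ} (h : a ≤ b) (hc : 0 ≤ c) : a / c ≤ b / c := by
  rcases eq_or_lt_of_le hc with h0 | h0
  · rw [← h0]
    simp
  · exact (div_le_div_iff_of_pos_right h0).2 h

lemma sum_prodDist {α β : Type*} [Fintype α] [Fintype β] (P : α → ℝ) (Q : β → ℝ) :
    ∑ v : α × β, prodDist P Q v = (∑ a, P a) * (∑ b, Q b) := by
  unfold prodDist
  rw [Fintype.sum_prod_type, Finset.sum_mul_sum]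

lemma push_prodMap {α β α' : Type*} [Fintype α] [Fintype β] [Fintype α']
    (f : α → α') (P : α → ℝ) (Q : β → ℝ) :
    push (fun v : α × β => (f v.1, v.2)) (prodDist P Q) = prodDist (push f P) Q := by
  funext y
  unfold push prodDist
  rw [Fintype.sum_prod_type, Finset.sum_mul]
  refine Finset.sum_congr rfl fun x _ => ?_
  by_cases hfx : f x = y.1
  · simp only [Prod.ext_iff, hfx, true_and]
    rw [Finset.sum_ite_eq' univ y.2 (fun u => P x * Q u)]
    simp [hfx]
  · simp [Prod.ext_iff, hfx]

lemma pushF_eval {σ β' ρ : Type*} [Fintype σ] [Fintype β'] {n : ℕ}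
    (k : Finset (Fin n) → σ → ρ) (P : σ × β' → ℝ) (τ : Finset (Fin n) → ℝ)
    (x : ρ) (t : Finset (Fin n)) (b : β') :
    push (fun v : (σ × β') × Finset (Fin n) => ((k v.2 v.1.1, v.2), v.1.2))
      (prodDist P τ) ((x, t), b)
    = τ t * push (fun u : σ × β' => (k t u.1, u.2)) P (x, b) := by
  unfold push prodDist
  rw [Fintype.sum_prod_type, Finset.mul_sum]
  refine Finset.sum_congr rfl fun u _ => ?_
  rw [Finset.sum_eq_single t]
  · by_cases h : (k t u.1, u.2) = (x, b)
    · have h1 : ((k t u.1, t), u.2) = ((x, t), b) := by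
        rw [Prod.ext_iff] at h ⊢
        rw [Prod.ext_iff]
        exact ⟨⟨h.1, rfl⟩, h.2⟩
      rw [if_pos h1, if_pos h]
      ring
    · have h1 : ((k t u.1, t), u.2) ≠ ((x, t), b) := by
        intro hc
        apply h
        rw [Prod.ext_iff] at hc
        have := hc.1
        rw [Prod.ext_iff] at this
        exact Prod.ext this.1 hc.2
      rw [if_neg h1, if_neg h]
      ring
  · intro t' _ hne
    have h1 : ((k t' u.1, t'), u.2) ≠ ((x, t), b) := by
      intro hc
      apply hne
      rw [Prod.ext_iff] at hc
      have := hc.1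
      rw [Prod.ext_iff] at this
      exact this.2
    rw [if_neg h1]
  · intro h
    exact absurd (Finset.mem_univ t) h

lemma pushG_eval {σ ρ : Type*} [Fintype σ] {n : ℕ} (k : Finset (Fin n) → σ → ρ)
    (P : σ → ℝ) (τ : Finset (Fin n) → ℝ) (x : ρ) (t : Finset (Fin n)) :
    push (fun v : σ × Finset (Fin n) => (k v.2 v.1, v.2)) (prodDist P τ) (x, t)
      = τ t * push (k t) P x := by
  unfold push prodDist
  rw [Fintype.sum_prod_type, Finset.mul_sum]
  refine Finset.sum_congr rfl fun u _ => ?_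
  rw [Finset.sum_eq_single t]
  · by_cases h : k t u = x
    · have h1 : (k t u, t) = (x, t) := by rw [Prod.ext_iff]; exact ⟨h, rfl⟩
      rw [if_pos h1, if_pos h]
      ring
    · have h1 : (k t u, t) ≠ (x, t) := by
        intro hc
        rw [Prod.ext_iff] at hc
        exact h hc.1
      rw [if_neg h1, if_neg h]
      ring
  · intro t' _ hne
    have h1 : (k t' u, t') ≠ (x, t) := by
      intro hc
      rw [Prod.ext_iff] at hc
      exact hne hc.2
    rw [if_neg h1]
  · intro h
    exact absurd (Finset.mem_univ t) h

lemma SD_slice {ρ β' : Type*} [Fintype ρ] [Fintype β'] {n : ℕ}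
    (τ : Finset (Fin n) → ℝ) (hτ : ∀ t, 0 ≤ τ t)
    (U : Finset (Fin n) → ρ × β' → ℝ) (V : Finset (Fin n) → ρ → ℝ) (Bd : β' → ℝ) :
    SD (fun v : (ρ × Finset (Fin n)) × β' => τ v.1.2 * U v.1.2 (v.1.1, v.2))
       (fun v => τ v.1.2 * (V v.1.2 v.1.1 * Bd v.2))
      = ∑ t, τ t * SD (U t) (prodDist (V t) Bd) := by
  unfold SD prodDist
  simp only [Fintype.sum_prod_type]
  have per : ∀ (t : Finset (Fin n)) (x : ρ) (b : β'),
      τ t * |U t (x, b) - V t x * Bd b| = |τ t * U t (x, b) - τ t * (V t x * Bd b)| := by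
    intro t x b
    rw [← mul_sub, abs_mul, abs_of_nonneg (hτ t)]
  have hR : ∑ t, τ t * (1/2 * ∑ x, ∑ b, |U t (x, b) - V t x * Bd b|)
      = 1/2 * ∑ t, ∑ x, ∑ b, |τ t * U t (x, b) - τ t * (V t x * Bd b)| := by
    rw [Finset.mul_sum]
    refine Finset.sum_congr rfl fun t _ => ?_
    rw [show τ t * (1/2 * ∑ x, ∑ b, |U t (x, b) - V t x * Bd b|)
        = 1/2 * (τ t * ∑ x, ∑ b, |U t (x, b) - V t x * Bd b|) by ring]
    congr 1
    rw [Finset.mul_sum]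
    refine Finset.sum_congr rfl fun x _ => ?_
    rw [Finset.mul_sum]
    exact Finset.sum_congr rfl fun b _ => per t x b
  rw [hR]
  congr 1
  exact Finset.sum_comm

end Hybrid

-- ### the per-z hybrid argument
section PerZ
open Finset

set_option maxHeartbeats 2000000 in
lemma per_z {α β : Type*} {n : ℕ} [Fintype α] [Fintype β]
    (ν : Ω → ℝ) (hν : IsPMF ν) (A : Ω → Fin n → α) (T : Ω → Finset (Fin n)) (B : Ω → β)
    (s : Finset (Fin n)) :
    ∑ a' : Fin n → Option α, rvDist ν (fun ω => restr s (A ω)) a' *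
      SD (condDist ν (fun ω => ((restr (T ω) (A ω), T ω), B ω)) (fun ω => restr s (A ω)) a')
         (prodDist (condDist ν (fun ω => (restr (T ω) (A ω), T ω)) (fun ω => restr s (A ω)) a')
                   (condDist ν B (fun ω => restr s (A ω)) a'))
    ≤ 2 * Real.sqrt (∑ t, rvDist ν T t *
          condMI ν (fun ω => restr t (A ω)) B (fun ω => restr s (A ω)))
      + 2 * SD (rvDist ν (fun ω => ((A ω, B ω), T ω)))
          (prodDist (rvDist ν (fun ω => (A ω, B ω))) (rvDist ν T)) := by
  classical
  have hν0 := hν.1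
  set Asv : Ω → Fin n → Option α := fun ω => restr s (A ω) with hAs
  set τ : Finset (Fin n) → ℝ := rvDist ν T with hτdef
  have hτnn : ∀ t, 0 ≤ τ t := fun t => rvDist_nonneg hν0 _ t
  have hwnn : ∀ a', 0 ≤ rvDist ν Asv a' := fun a' => rvDist_nonneg hν0 _ a'
  have hwsum : ∑ a', rvDist ν Asv a' = 1 := by rw [rvDist_sum]; exact hν.2
  have hτsum : ∑ t, τ t = 1 := by rw [hτdef, rvDist_sum]; exact hν.2
  -- STEP 1: the per-a' hybrid bound
  have key : ∀ a' : Fin n → Option α, rvDist ν Asv a' *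
      SD (condDist ν (fun ω => ((restr (T ω) (A ω), T ω), B ω)) Asv a')
         (prodDist (condDist ν (fun ω => (restr (T ω) (A ω), T ω)) Asv a')
                   (condDist ν B Asv a'))
      ≤ rvDist ν Asv a' * (2 * SD (condDist ν (fun ω => ((A ω, B ω), T ω)) Asv a')
            (prodDist (condDist ν (fun ω => (A ω, B ω)) Asv a') τ)
          + ∑ t, τ t * SD (condDist ν (fun ω => (restr t (A ω), B ω)) Asv a')
              (prodDist (condDist ν (fun ω => restr t (A ω)) Asv a')
                        (condDist ν B Asv a'))) := by
    intro a'
    refine mul_le_mul_of_nonneg_left ?_ (hwnn a')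
    have hBdnn : ∀ b, 0 ≤ condDist ν B Asv a' b := fun b => condDist_nonneg hν0 B Asv a' b
    have hBdsum : ∑ b, condDist ν B Asv a' b ≤ 1 := condDist_sum_le_one hν0 B Asv a'
    have hJ : condDist ν (fun ω => ((restr (T ω) (A ω), T ω), B ω)) Asv a'
        = push (fun v : ((Fin n → α) × β) × Finset (Fin n) => ((restr v.2 v.1.1, v.2), v.1.2))
            (condDist ν (fun ω => ((A ω, B ω), T ω)) Asv a') :=
      condDist_comp ν (fun ω => ((A ω, B ω), T ω))
        (fun v => ((restr v.2 v.1.1, v.2), v.1.2)) Asv a'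
    have hM1 : condDist ν (fun ω => (restr (T ω) (A ω), T ω)) Asv a'
        = push (fun v : (Fin n → α) × Finset (Fin n) => (restr v.2 v.1, v.2))
            (condDist ν (fun ω => (A ω, T ω)) Asv a') :=
      condDist_comp ν (fun ω => (A ω, T ω)) (fun v => (restr v.2 v.1, v.2)) Asv a'
    have hM2 : condDist ν (fun ω => (A ω, T ω)) Asv a'
        = push (fun v : ((Fin n → α) × β) × Finset (Fin n) => (v.1.1, v.2))
            (condDist ν (fun ω => ((A ω, B ω), T ω)) Asv a') :=
      condDist_comp ν (fun ω => ((A ω, B ω), T ω)) (fun v => (v.1.1, v.2)) Asv a'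
    have hcdA : condDist ν A Asv a' = push Prod.fst (condDist ν (fun ω => (A ω, B ω)) Asv a') :=
      condDist_comp ν (fun ω => (A ω, B ω)) Prod.fst Asv a'
    have hprojE : push (fun v : ((Fin n → α) × β) × Finset (Fin n) => (v.1.1, v.2))
        (prodDist (condDist ν (fun ω => (A ω, B ω)) Asv a') τ)
        = prodDist (condDist ν A Asv a') τ := by
      rw [hcdA]
      exact push_prodMap Prod.fst (condDist ν (fun ω => (A ω, B ω)) Asv a') τ
    -- explicit form of the first hybrid
    have hH1 : push (fun v : ((Fin n → α) × β) × Finset (Fin n) => ((restr v.2 v.1.1, v.2), v.1.2))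
        (prodDist (condDist ν (fun ω => (A ω, B ω)) Asv a') τ)
        = fun v : ((Fin n → Option α) × Finset (Fin n)) × β =>
            τ v.1.2 * condDist ν (fun ω => (restr v.1.2 (A ω), B ω)) Asv a' (v.1.1, v.2) := by
      funext v
      obtain ⟨⟨x, t⟩, b⟩ := v
      have h1 := pushF_eval (fun (t : Finset (Fin n)) (a : Fin n → α) => restr t a)
        (condDist ν (fun ω => (A ω, B ω)) Asv a') τ x t b
      have h2 : condDist ν (fun ω => (restr t (A ω), B ω)) Asv a'
          = push (fun u : (Fin n → α) × β => (restr t u.1, u.2))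
              (condDist ν (fun ω => (A ω, B ω)) Asv a') :=
        condDist_comp ν (fun ω => (A ω, B ω)) (fun u => (restr t u.1, u.2)) Asv a'
      show _ = τ t * condDist ν (fun ω => (restr t (A ω), B ω)) Asv a' (x, b)
      rw [h2]
      exact h1
    -- explicit form of the second hybrid core
    have hH3 : ∀ (x : Fin n → Option α) (t : Finset (Fin n)),
        push (fun v : (Fin n → α) × Finset (Fin n) => (restr v.2 v.1, v.2))
          (prodDist (condDist ν A Asv a') τ) (x, t)
        = τ t * condDist ν (fun ω => restr t (A ω)) Asv a' x := by
      intro x t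
      have h1 := pushG_eval (fun (t : Finset (Fin n)) (a : Fin n → α) => restr t a)
        (condDist ν A Asv a') τ x t
      have h2 : condDist ν (fun ω => restr t (A ω)) Asv a'
          = push (restr t) (condDist ν A Asv a') :=
        condDist_comp ν A (restr t) Asv a'
      rw [h2]
      exact h1
    have e_right : prodDist (push (fun v : (Fin n → α) × Finset (Fin n) => (restr v.2 v.1, v.2))
          (push (fun v : ((Fin n → α) × β) × Finset (Fin n) => (v.1.1, v.2))
            (prodDist (condDist ν (fun ω => (A ω, B ω)) Asv a') τ)))
          (condDist ν B Asv a')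
        = fun v : ((Fin n → Option α) × Finset (Fin n)) × β =>
            τ v.1.2 * (condDist ν (fun ω => restr v.1.2 (A ω)) Asv a' v.1.1
              * condDist ν B Asv a' v.2) := by
      rw [hprojE]
      funext v
      obtain ⟨⟨x, t⟩, b⟩ := v
      show push _ (prodDist (condDist ν A Asv a') τ) (x, t) * condDist ν B Asv a' b = _
      rw [hH3 x t]
      ring
    -- the three inequalities
    have i1 : SD (push (fun v : ((Fin n → α) × β) × Finset (Fin n) => ((restr v.2 v.1.1, v.2), v.1.2))
          (condDist ν (fun ω => ((A ω, B ω), T ω)) Asv a'))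
        (push (fun v : ((Fin n → α) × β) × Finset (Fin n) => ((restr v.2 v.1.1, v.2), v.1.2))
          (prodDist (condDist ν (fun ω => (A ω, B ω)) Asv a') τ))
        ≤ SD (condDist ν (fun ω => ((A ω, B ω), T ω)) Asv a')
            (prodDist (condDist ν (fun ω => (A ω, B ω)) Asv a') τ) := SD_push _ _ _
    have i2 : SD (push (fun v : ((Fin n → α) × β) × Finset (Fin n) => ((restr v.2 v.1.1, v.2), v.1.2))
          (prodDist (condDist ν (fun ω => (A ω, B ω)) Asv a') τ))
        (prodDist (push (fun v : (Fin n → α) × Finset (Fin n) => (restr v.2 v.1, v.2))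
          (push (fun v : ((Fin n → α) × β) × Finset (Fin n) => (v.1.1, v.2))
            (prodDist (condDist ν (fun ω => (A ω, B ω)) Asv a') τ)))
          (condDist ν B Asv a'))
        = ∑ t, τ t * SD (condDist ν (fun ω => (restr t (A ω), B ω)) Asv a')
            (prodDist (condDist ν (fun ω => restr t (A ω)) Asv a') (condDist ν B Asv a')) := by
      rw [hH1, e_right]
      exact SD_slice τ hτnn
        (fun t => condDist ν (fun ω => (restr t (A ω), B ω)) Asv a')
        (fun t => condDist ν (fun ω => restr t (A ω)) Asv a')
        (condDist ν B Asv a')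
    have i3a := SD_prod_right
        (push (fun v : (Fin n → α) × Finset (Fin n) => (restr v.2 v.1, v.2))
          (push (fun v : ((Fin n → α) × β) × Finset (Fin n) => (v.1.1, v.2))
            (prodDist (condDist ν (fun ω => (A ω, B ω)) Asv a') τ)))
        (push (fun v : (Fin n → α) × Finset (Fin n) => (restr v.2 v.1, v.2))
          (push (fun v : ((Fin n → α) × β) × Finset (Fin n) => (v.1.1, v.2))
            (condDist ν (fun ω => ((A ω, B ω), T ω)) Asv a')))
        (condDist ν B Asv a') hBdnn hBdsum
    have i3b := SD_push (fun v : (Fin n → α) × Finset (Fin n) => (restr v.2 v.1, v.2))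
        (push (fun v : ((Fin n → α) × β) × Finset (Fin n) => (v.1.1, v.2))
          (prodDist (condDist ν (fun ω => (A ω, B ω)) Asv a') τ))
        (push (fun v : ((Fin n → α) × β) × Finset (Fin n) => (v.1.1, v.2))
          (condDist ν (fun ω => ((A ω, B ω), T ω)) Asv a'))
    have i3c := SD_push (fun v : ((Fin n → α) × β) × Finset (Fin n) => (v.1.1, v.2))
        (prodDist (condDist ν (fun ω => (A ω, B ω)) Asv a') τ)
        (condDist ν (fun ω => ((A ω, B ω), T ω)) Asv a')
    have i3d := SD_comm (prodDist (condDist ν (fun ω => (A ω, B ω)) Asv a') τ)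
        (condDist ν (fun ω => ((A ω, B ω), T ω)) Asv a')
    rw [hJ, hM1, hM2]
    have tri1 := SD_triangle
      (push (fun v : ((Fin n → α) × β) × Finset (Fin n) => ((restr v.2 v.1.1, v.2), v.1.2))
        (condDist ν (fun ω => ((A ω, B ω), T ω)) Asv a'))
      (push (fun v : ((Fin n → α) × β) × Finset (Fin n) => ((restr v.2 v.1.1, v.2), v.1.2))
        (prodDist (condDist ν (fun ω => (A ω, B ω)) Asv a') τ))
      (prodDist (push (fun v : (Fin n → α) × Finset (Fin n) => (restr v.2 v.1, v.2))
        (push (fun v : ((Fin n → α) × β) × Finset (Fin n) => (v.1.1, v.2))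
          (condDist ν (fun ω => ((A ω, B ω), T ω)) Asv a')))
        (condDist ν B Asv a'))
    have tri2 := SD_triangle
      (push (fun v : ((Fin n → α) × β) × Finset (Fin n) => ((restr v.2 v.1.1, v.2), v.1.2))
        (prodDist (condDist ν (fun ω => (A ω, B ω)) Asv a') τ))
      (prodDist (push (fun v : (Fin n → α) × Finset (Fin n) => (restr v.2 v.1, v.2))
        (push (fun v : ((Fin n → α) × β) × Finset (Fin n) => (v.1.1, v.2))
          (prodDist (condDist ν (fun ω => (A ω, B ω)) Asv a') τ)))
        (condDist ν B Asv a'))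
      (prodDist (push (fun v : (Fin n → α) × Finset (Fin n) => (restr v.2 v.1, v.2))
        (push (fun v : ((Fin n → α) × β) × Finset (Fin n) => (v.1.1, v.2))
          (condDist ν (fun ω => ((A ω, B ω), T ω)) Asv a')))
        (condDist ν B Asv a'))
    linarith [i1, le_of_eq i2, i3a, i3b, i3c, i3d]
  -- STEP 2: the δ bound
  have delta_bound : ∑ a' : Fin n → Option α, rvDist ν Asv a' *
      SD (condDist ν (fun ω => ((A ω, B ω), T ω)) Asv a')
         (prodDist (condDist ν (fun ω => (A ω, B ω)) Asv a') τ)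
      ≤ SD (rvDist ν (fun ω => ((A ω, B ω), T ω)))
          (prodDist (rvDist ν (fun ω => (A ω, B ω))) τ) := by
    have per : ∀ a' : Fin n → Option α, rvDist ν Asv a' *
        SD (condDist ν (fun ω => ((A ω, B ω), T ω)) Asv a')
           (prodDist (condDist ν (fun ω => (A ω, B ω)) Asv a') τ)
        = 1/2 * ∑ v : ((Fin n → α) × β) × Finset (Fin n),
            |prEv ν (fun ω => ((A ω, B ω), T ω) = v ∧ Asv ω = a')
              - prEv ν (fun ω => (A ω, B ω) = v.1 ∧ Asv ω = a') * τ v.2| := by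
      intro a'
      rcases eq_or_ne (rvDist ν Asv a') 0 with h0 | h0
      · have z1 : ∀ v : ((Fin n → α) × β) × Finset (Fin n),
            prEv ν (fun ω => ((A ω, B ω), T ω) = v ∧ Asv ω = a') = 0 := fun v =>
          prEv_eq_zero hν0 (fun ω hw => hw.2) h0
        have z2 : ∀ u : (Fin n → α) × β,
            prEv ν (fun ω => (A ω, B ω) = u ∧ Asv ω = a') = 0 := fun u =>
          prEv_eq_zero hν0 (fun ω hw => hw.2) h0
        rw [h0, zero_mul]
        symm
        simp [z1, z2]
      · unfold SD
        rw [show rvDist ν Asv a' * (1/2 * ∑ v : ((Fin n → α) × β) × Finset (Fin n),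
            |condDist ν (fun ω => ((A ω, B ω), T ω)) Asv a' v
              - prodDist (condDist ν (fun ω => (A ω, B ω)) Asv a') τ v|)
          = 1/2 * ∑ v : ((Fin n → α) × β) × Finset (Fin n), rvDist ν Asv a' *
            |condDist ν (fun ω => ((A ω, B ω), T ω)) Asv a' v
              - prodDist (condDist ν (fun ω => (A ω, B ω)) Asv a') τ v| from by
          rw [← Finset.mul_sum]; ring]
        congr 1
        refine Finset.sum_congr rfl fun v _ => ?_
        have e1 : rvDist ν Asv a' * condDist ν (fun ω => ((A ω, B ω), T ω)) Asv a' v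
            = prEv ν (fun ω => ((A ω, B ω), T ω) = v ∧ Asv ω = a') := by
          unfold condDist rvDist
          rw [mul_comm, div_mul_cancel₀]
          exact h0
        have e2 : rvDist ν Asv a' * condDist ν (fun ω => (A ω, B ω)) Asv a' v.1
            = prEv ν (fun ω => (A ω, B ω) = v.1 ∧ Asv ω = a') := by
          unfold condDist rvDist
          rw [mul_comm, div_mul_cancel₀]
          exact h0
        rw [← abs_of_nonneg (hwnn a'), ← abs_mul]
        congr 1
        rw [mul_sub, e1,
          show prodDist (condDist ν (fun ω => (A ω, B ω)) Asv a') τ v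
            = condDist ν (fun ω => (A ω, B ω)) Asv a' v.1 * τ v.2 from rfl,
          ← mul_assoc, e2]
    have collapse : ∀ v : ((Fin n → α) × β) × Finset (Fin n),
        ∑ a' : Fin n → Option α,
          |prEv ν (fun ω => ((A ω, B ω), T ω) = v ∧ Asv ω = a')
            - prEv ν (fun ω => (A ω, B ω) = v.1 ∧ Asv ω = a') * τ v.2|
        = |rvDist ν (fun ω => ((A ω, B ω), T ω)) v
            - prodDist (rvDist ν (fun ω => (A ω, B ω))) τ v| := by
      intro v
      rw [Finset.sum_eq_single (restr s v.1.1)]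
      · have c1 : prEv ν (fun ω => ((A ω, B ω), T ω) = v ∧ Asv ω = restr s v.1.1)
            = rvDist ν (fun ω => ((A ω, B ω), T ω)) v := by
          refine prEv_congr ν fun ω => ?_
          constructor
          · exact fun h => h.1
          · intro h
            refine ⟨h, ?_⟩
            show restr s (A ω) = restr s v.1.1
            have hA : A ω = v.1.1 := congrArg (fun p => p.1.1) h
            rw [hA]
        have c2 : prEv ν (fun ω => (A ω, B ω) = v.1 ∧ Asv ω = restr s v.1.1)
            = rvDist ν (fun ω => (A ω, B ω)) v.1 := by
          refine prEv_congr ν fun ω => ?_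
          constructor
          · exact fun h => h.1
          · intro h
            refine ⟨h, ?_⟩
            show restr s (A ω) = restr s v.1.1
            have hA : A ω = v.1.1 := congrArg Prod.fst h
            rw [hA]
        rw [c1, c2]
        rfl
      · intro a' _ hne
        have z1 : prEv ν (fun ω => ((A ω, B ω), T ω) = v ∧ Asv ω = a') = 0 := by
          have himp : ∀ ω, ¬(((A ω, B ω), T ω) = v ∧ Asv ω = a') := by
            rintro ω ⟨h1, h2⟩
            apply hne
            have hA : A ω = v.1.1 := congrArg (fun p => p.1.1) h1
            have : Asv ω = restr s v.1.1 := by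
              show restr s (A ω) = restr s v.1.1
              rw [hA]
            exact h2.symm.trans this
          rw [prEv_congr ν (show ∀ ω, (((A ω, B ω), T ω) = v ∧ Asv ω = a') ↔ False from
            fun ω => ⟨himp ω, False.elim⟩)]
          unfold prEv
          simp
        have z2 : prEv ν (fun ω => (A ω, B ω) = v.1 ∧ Asv ω = a') = 0 := by
          have himp : ∀ ω, ¬((A ω, B ω) = v.1 ∧ Asv ω = a') := by
            rintro ω ⟨h1, h2⟩
            apply hne
            have hA : A ω = v.1.1 := congrArg Prod.fst h1
            have : Asv ω = restr s v.1.1 := by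
              show restr s (A ω) = restr s v.1.1
              rw [hA]
            exact h2.symm.trans this
          rw [prEv_congr ν (show ∀ ω, ((A ω, B ω) = v.1 ∧ Asv ω = a') ↔ False from
            fun ω => ⟨himp ω, False.elim⟩)]
          unfold prEv
          simp
        rw [z1, z2]
        simp
      · intro h
        exact absurd (Finset.mem_univ _) h
    calc ∑ a' : Fin n → Option α, rvDist ν Asv a' *
        SD (condDist ν (fun ω => ((A ω, B ω), T ω)) Asv a')
           (prodDist (condDist ν (fun ω => (A ω, B ω)) Asv a') τ)
        = ∑ a' : Fin n → Option α, 1/2 * ∑ v : ((Fin n → α) × β) × Finset (Fin n),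
            |prEv ν (fun ω => ((A ω, B ω), T ω) = v ∧ Asv ω = a')
              - prEv ν (fun ω => (A ω, B ω) = v.1 ∧ Asv ω = a') * τ v.2| :=
          Finset.sum_congr rfl fun a' _ => per a'
      _ = 1/2 * ∑ v : ((Fin n → α) × β) × Finset (Fin n), ∑ a' : Fin n → Option α,
            |prEv ν (fun ω => ((A ω, B ω), T ω) = v ∧ Asv ω = a')
              - prEv ν (fun ω => (A ω, B ω) = v.1 ∧ Asv ω = a') * τ v.2| := by
          rw [← Finset.mul_sum]
          congr 1
          exact Finset.sum_comm
      _ ≤ SD (rvDist ν (fun ω => ((A ω, B ω), T ω)))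
            (prodDist (rvDist ν (fun ω => (A ω, B ω))) τ) := by
          refine le_of_eq ?_
          unfold SD
          congr 1
          exact Finset.sum_congr rfl fun v _ => collapse v
  -- STEP 3: Pinsker per pair
  have pin : ∀ (a' : Fin n → Option α) (t : Finset (Fin n)),
      0 ≤ KL2 (condDist ν (fun ω => (restr t (A ω), B ω)) Asv a')
        (prodDist (condDist ν (fun ω => restr t (A ω)) Asv a') (condDist ν B Asv a'))
      ∧ rvDist ν Asv a' * τ t * SD (condDist ν (fun ω => (restr t (A ω), B ω)) Asv a')
          (prodDist (condDist ν (fun ω => restr t (A ω)) Asv a') (condDist ν B Asv a'))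
        ≤ rvDist ν Asv a' * τ t * (2 * Real.sqrt (KL2 (condDist ν (fun ω => (restr t (A ω), B ω)) Asv a')
        (prodDist (condDist ν (fun ω => restr t (A ω)) Asv a') (condDist ν B Asv a')))) := by
    intro a' t
    rcases eq_or_ne (rvDist ν Asv a') 0 with h0 | h0
    · have hz : condDist ν (fun ω => (restr t (A ω), B ω)) Asv a' = fun _ => 0 :=
        condDist_zero _ _ _ h0
      constructor
      · rw [hz]
        unfold KL2
        simp
      · rw [h0]
        simp
    · have hPnn : ∀ v, 0 ≤ condDist ν (fun ω => (restr t (A ω), B ω)) Asv a' v :=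
        condDist_nonneg hν0 _ _ _
      have hPs : ∑ v, condDist ν (fun ω => (restr t (A ω), B ω)) Asv a' v = 1 :=
        condDist_sum _ _ _ h0
      have hQnn : ∀ v : (Fin n → Option α) × β,
          0 ≤ prodDist (condDist ν (fun ω => restr t (A ω)) Asv a') (condDist ν B Asv a') v :=
        fun v => mul_nonneg (condDist_nonneg hν0 _ _ _ _) (condDist_nonneg hν0 _ _ _ _)
      have hQs : ∑ v : (Fin n → Option α) × β,
          prodDist (condDist ν (fun ω => restr t (A ω)) Asv a') (condDist ν B Asv a') v = 1 := by
        rw [sum_prodDist, condDist_sum _ _ _ h0, condDist_sum _ _ _ h0]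
        norm_num
      have dom1 : ∀ v : (Fin n → Option α) × β,
          condDist ν (fun ω => (restr t (A ω), B ω)) Asv a' v
            ≤ condDist ν (fun ω => restr t (A ω)) Asv a' v.1 := by
        intro v
        unfold condDist
        exact div_le_div_nonneg_den
          (prEv_mono hν0 fun ω hw => ⟨congrArg Prod.fst hw.1, hw.2⟩) (prEv_nonneg hν0 _)
      have dom2 : ∀ v : (Fin n → Option α) × β,
          condDist ν (fun ω => (restr t (A ω), B ω)) Asv a' v ≤ condDist ν B Asv a' v.2 := by
        intro v
        unfold condDist
        exact div_le_div_nonneg_den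
          (prEv_mono hν0 fun ω hw => ⟨congrArg Prod.snd hw.1, hw.2⟩) (prEv_nonneg hν0 _)
      have hac : ∀ v : (Fin n → Option α) × β,
          prodDist (condDist ν (fun ω => restr t (A ω)) Asv a') (condDist ν B Asv a') v = 0 →
          condDist ν (fun ω => (restr t (A ω), B ω)) Asv a' v = 0 := by
        intro v hv
        rcases mul_eq_zero.1 hv with h | h
        · exact le_antisymm (h ▸ dom1 v) (hPnn v)
        · exact le_antisymm (h ▸ dom2 v) (hPnn v)
      exact ⟨KL2_nonneg' hPnn hQnn hPs hQs hac,
        mul_le_mul_of_nonneg_left (pinsker hPnn hQnn hPs hQs hac)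
          (mul_nonneg (hwnn a') (hτnn t))⟩
  -- STEP 4: Cauchy–Schwarz / Jensen
  have hchain : ∀ t : Finset (Fin n), ∑ a' : Fin n → Option α, rvDist ν Asv a' * (KL2 (condDist ν (fun ω => (restr t (A ω), B ω)) Asv a')
        (prodDist (condDist ν (fun ω => restr t (A ω)) Asv a') (condDist ν B Asv a')))
      = condMI ν (fun ω => restr t (A ω)) B Asv := fun t =>
    (condMI_eq_KL ν hν0 (fun ω => restr t (A ω)) B Asv).symm
  have cs : ∑ a' : Fin n → Option α, ∑ t, (rvDist ν Asv a' * τ t) * Real.sqrt (KL2 (condDist ν (fun ω => (restr t (A ω), B ω)) Asv a')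
        (prodDist (condDist ν (fun ω => restr t (A ω)) Asv a') (condDist ν B Asv a')))
      ≤ Real.sqrt (∑ t, τ t * condMI ν (fun ω => restr t (A ω)) B Asv) := by
    have hfs : ∑ p : (Fin n → Option α) × Finset (Fin n), rvDist ν Asv p.1 * τ p.2 = 1 := by
      rw [Fintype.sum_prod_type]
      calc ∑ a' : Fin n → Option α, ∑ t, rvDist ν Asv a' * τ t
          = ∑ a' : Fin n → Option α, rvDist ν Asv a' * ∑ t, τ t := by
            exact Finset.sum_congr rfl fun a' _ => (Finset.mul_sum _ _ _).symm
        _ = 1 := by rw [hτsum]; simp [hwsum]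
    have hgs : ∑ p : (Fin n → Option α) × Finset (Fin n),
        rvDist ν Asv p.1 * τ p.2 * (KL2 (condDist ν (fun ω => (restr p.2 (A ω), B ω)) Asv p.1)
        (prodDist (condDist ν (fun ω => restr p.2 (A ω)) Asv p.1) (condDist ν B Asv p.1)))
        = ∑ t, τ t * condMI ν (fun ω => restr t (A ω)) B Asv := by
      rw [Fintype.sum_prod_type, Finset.sum_comm]
      refine Finset.sum_congr rfl fun t _ => ?_
      rw [← hchain t, Finset.mul_sum]
      refine Finset.sum_congr rfl fun a' _ => ?_
      ring
    have per : ∀ p : (Fin n → Option α) × Finset (Fin n),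
        (rvDist ν Asv p.1 * τ p.2) * Real.sqrt (KL2 (condDist ν (fun ω => (restr p.2 (A ω), B ω)) Asv p.1)
        (prodDist (condDist ν (fun ω => restr p.2 (A ω)) Asv p.1) (condDist ν B Asv p.1)))
        = Real.sqrt (rvDist ν Asv p.1 * τ p.2)
          * Real.sqrt (rvDist ν Asv p.1 * τ p.2 * (KL2 (condDist ν (fun ω => (restr p.2 (A ω), B ω)) Asv p.1)
        (prodDist (condDist ν (fun ω => restr p.2 (A ω)) Asv p.1) (condDist ν B Asv p.1)))) := by
      intro p
      have h1 : 0 ≤ rvDist ν Asv p.1 * τ p.2 := mul_nonneg (hwnn p.1) (hτnn p.2)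
      rw [Real.sqrt_mul h1, ← mul_assoc, Real.mul_self_sqrt h1]
    calc ∑ a' : Fin n → Option α, ∑ t, (rvDist ν Asv a' * τ t) * Real.sqrt (KL2 (condDist ν (fun ω => (restr t (A ω), B ω)) Asv a')
        (prodDist (condDist ν (fun ω => restr t (A ω)) Asv a') (condDist ν B Asv a')))
        = ∑ p : (Fin n → Option α) × Finset (Fin n),
            (rvDist ν Asv p.1 * τ p.2) * Real.sqrt (KL2 (condDist ν (fun ω => (restr p.2 (A ω), B ω)) Asv p.1)
        (prodDist (condDist ν (fun ω => restr p.2 (A ω)) Asv p.1) (condDist ν B Asv p.1))) :=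
          (Fintype.sum_prod_type (f := fun p : (Fin n → Option α) × Finset (Fin n) =>
            (rvDist ν Asv p.1 * τ p.2) * Real.sqrt (KL2
              (condDist ν (fun ω => (restr p.2 (A ω), B ω)) Asv p.1)
              (prodDist (condDist ν (fun ω => restr p.2 (A ω)) Asv p.1)
                (condDist ν B Asv p.1))))).symm
      _ = ∑ p : (Fin n → Option α) × Finset (Fin n),
            Real.sqrt (rvDist ν Asv p.1 * τ p.2)
              * Real.sqrt (rvDist ν Asv p.1 * τ p.2 * (KL2 (condDist ν (fun ω => (restr p.2 (A ω), B ω)) Asv p.1)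
        (prodDist (condDist ν (fun ω => restr p.2 (A ω)) Asv p.1) (condDist ν B Asv p.1)))) :=
          Finset.sum_congr rfl fun p _ => per p
      _ ≤ Real.sqrt (∑ p : (Fin n → Option α) × Finset (Fin n), rvDist ν Asv p.1 * τ p.2)
            * Real.sqrt (∑ p : (Fin n → Option α) × Finset (Fin n),
                rvDist ν Asv p.1 * τ p.2 * (KL2 (condDist ν (fun ω => (restr p.2 (A ω), B ω)) Asv p.1)
        (prodDist (condDist ν (fun ω => restr p.2 (A ω)) Asv p.1) (condDist ν B Asv p.1)))) :=
          Real.sum_sqrt_mul_sqrt_le _ (fun p => mul_nonneg (hwnn p.1) (hτnn p.2))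
            (fun p => mul_nonneg (mul_nonneg (hwnn p.1) (hτnn p.2)) (pin p.1 p.2).1)
      _ = Real.sqrt (∑ t, τ t * condMI ν (fun ω => restr t (A ω)) B Asv) := by
          rw [hfs, hgs, Real.sqrt_one, one_mul]
  -- STEP 5: put everything together
  calc ∑ a' : Fin n → Option α, rvDist ν Asv a' *
      SD (condDist ν (fun ω => ((restr (T ω) (A ω), T ω), B ω)) Asv a')
         (prodDist (condDist ν (fun ω => (restr (T ω) (A ω), T ω)) Asv a')
                   (condDist ν B Asv a'))
      ≤ ∑ a' : Fin n → Option α, rvDist ν Asv a' *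
          (2 * SD (condDist ν (fun ω => ((A ω, B ω), T ω)) Asv a')
              (prodDist (condDist ν (fun ω => (A ω, B ω)) Asv a') τ)
            + ∑ t, τ t * SD (condDist ν (fun ω => (restr t (A ω), B ω)) Asv a')
                (prodDist (condDist ν (fun ω => restr t (A ω)) Asv a')
                          (condDist ν B Asv a'))) :=
        Finset.sum_le_sum fun a' _ => key a'
    _ = 2 * (∑ a' : Fin n → Option α, rvDist ν Asv a' *
          SD (condDist ν (fun ω => ((A ω, B ω), T ω)) Asv a')
             (prodDist (condDist ν (fun ω => (A ω, B ω)) Asv a') τ))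
        + ∑ a' : Fin n → Option α, ∑ t, (rvDist ν Asv a' * τ t) *
            SD (condDist ν (fun ω => (restr t (A ω), B ω)) Asv a')
              (prodDist (condDist ν (fun ω => restr t (A ω)) Asv a')
                        (condDist ν B Asv a')) := by
        rw [Finset.mul_sum, ← Finset.sum_add_distrib]
        refine Finset.sum_congr rfl fun a' _ => ?_
        rw [mul_add, Finset.mul_sum]
        congr 1
        · ring
        · exact Finset.sum_congr rfl fun t _ => by ring
    _ ≤ 2 * SD (rvDist ν (fun ω => ((A ω, B ω), T ω)))
          (prodDist (rvDist ν (fun ω => (A ω, B ω))) τ)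
        + ∑ a' : Fin n → Option α, ∑ t, (rvDist ν Asv a' * τ t) * (2 * Real.sqrt (KL2 (condDist ν (fun ω => (restr t (A ω), B ω)) Asv a')
        (prodDist (condDist ν (fun ω => restr t (A ω)) Asv a') (condDist ν B Asv a')))) :=
        add_le_add (mul_le_mul_of_nonneg_left delta_bound (by norm_num))
          (Finset.sum_le_sum fun a' _ => Finset.sum_le_sum fun t _ => (pin a' t).2)
    _ = 2 * SD (rvDist ν (fun ω => ((A ω, B ω), T ω)))
          (prodDist (rvDist ν (fun ω => (A ω, B ω))) τ)
        + 2 * ∑ a' : Fin n → Option α, ∑ t, (rvDist ν Asv a' * τ t) * Real.sqrt (KL2 (condDist ν (fun ω => (restr t (A ω), B ω)) Asv a')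
        (prodDist (condDist ν (fun ω => restr t (A ω)) Asv a') (condDist ν B Asv a'))) := by
        congr 1
        rw [Finset.mul_sum]
        refine Finset.sum_congr rfl fun a' _ => ?_
        rw [Finset.mul_sum]
        exact Finset.sum_congr rfl fun t _ => by ring
    _ ≤ 2 * SD (rvDist ν (fun ω => ((A ω, B ω), T ω)))
          (prodDist (rvDist ν (fun ω => (A ω, B ω))) τ)
        + 2 * Real.sqrt (∑ t, τ t * condMI ν (fun ω => restr t (A ω)) B Asv) :=
        add_le_add_right (mul_le_mul_of_nonneg_left cs (by norm_num : (0:ℝ) ≤ 2)) _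
    _ = 2 * Real.sqrt (∑ t, τ t * condMI ν (fun ω => restr t (A ω)) B Asv)
        + 2 * SD (rvDist ν (fun ω => ((A ω, B ω), T ω)))
            (prodDist (rvDist ν (fun ω => (A ω, B ω))) τ) := by ring

end PerZ

-- ### final assembly helpers
section Assemble
open Finset

lemma condMI_nonneg {α β γ : Type*} [Fintype α] [Fintype β] [Fintype γ]
    (ν : Ω → ℝ) (hν : IsPMF ν) (X : Ω → α) (B : Ω → β) (C : Ω → γ) :
    0 ≤ condMI ν X B C := by
  have hν0 := hν.1
  rw [condMI_eq_KL ν hν0 X B C]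
  refine Finset.sum_nonneg fun c _ => ?_
  rcases eq_or_ne (rvDist ν C c) 0 with h0 | h0
  · rw [h0]
    simp
  · refine mul_nonneg (rvDist_nonneg hν0 C c) ?_
    have dom1 : ∀ v : α × β, condDist ν (fun ω => (X ω, B ω)) C c v
        ≤ condDist ν X C c v.1 := by
      intro v
      unfold condDist
      exact div_le_div_nonneg_den
        (prEv_mono hν0 fun ω hw => ⟨congrArg Prod.fst hw.1, hw.2⟩) (prEv_nonneg hν0 _)
    have dom2 : ∀ v : α × β, condDist ν (fun ω => (X ω, B ω)) C c v
        ≤ condDist ν B C c v.2 := by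
      intro v
      unfold condDist
      exact div_le_div_nonneg_den
        (prEv_mono hν0 fun ω hw => ⟨congrArg Prod.snd hw.1, hw.2⟩) (prEv_nonneg hν0 _)
    refine KL2_nonneg' (condDist_nonneg hν0 _ _ _)
      (fun v => mul_nonneg (condDist_nonneg hν0 _ _ _ _) (condDist_nonneg hν0 _ _ _ _))
      (condDist_sum _ _ _ h0) ?_ ?_
    · rw [sum_prodDist, condDist_sum _ _ _ h0, condDist_sum _ _ _ h0]
      norm_num
    · intro v hv
      rcases mul_eq_zero.1 hv with h | h
      · exact le_antisymm (h ▸ dom1 v) (condDist_nonneg hν0 _ _ _ _)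
      · exact le_antisymm (h ▸ dom2 v) (condDist_nonneg hν0 _ _ _ _)

lemma rvDist_pair_condMeas {ζ η : Type*} (μ : Ω → ℝ) (hμ0 : ∀ ω, 0 ≤ μ ω)
    (Z : Ω → ζ) (z : ζ) (W W' : Ω → η) (hW : ∀ ω, Z ω = z → W ω = W' ω) (w : η) :
    rvDist μ (fun ω => (Z ω, W ω)) (z, w)
      = rvDist μ Z z * rvDist (condMeas μ Z z) W' w := by
  rw [← rvDist_pair μ Z z hμ0 W' w]
  unfold rvDist
  refine prEv_congr μ fun ω => ?_
  rw [Prod.ext_iff, Prod.ext_iff]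
  constructor
  · rintro ⟨hz, hw⟩
    exact ⟨hz, by show W' ω = w; rw [← hW ω hz]; exact hw⟩
  · rintro ⟨hz, hw⟩
    exact ⟨hz, by show W ω = w; rw [hW ω hz]; exact hw⟩

lemma condDist_pair_condMeas {ζ κ η : Type*} (μ : Ω → ℝ) (hμ0 : ∀ ω, 0 ≤ μ ω)
    (Z : Ω → ζ) (z : ζ) (X : Ω → κ) (W W' : Ω → η)
    (hW : ∀ ω, Z ω = z → W ω = W' ω) (w : η) :
    condDist μ X (fun ω => (Z ω, W ω)) (z, w) = condDist (condMeas μ Z z) X W' w := by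
  rw [condDist_condMeas μ Z z hμ0 X W' w]
  funext x
  unfold condDist
  congr 1
  · refine prEv_congr μ fun ω => ?_
    constructor
    · rintro ⟨hx, hp⟩
      rw [Prod.ext_iff] at hp
      exact ⟨hx, by show W' ω = w; rw [← hW ω hp.1]; exact hp.2, hp.1⟩
    · rintro ⟨hx, hw', hz⟩
      refine ⟨hx, ?_⟩
      rw [Prod.ext_iff]
      exact ⟨hz, by show W ω = w; rw [hW ω hz]; exact hw'⟩
  · refine prEv_congr μ fun ω => ?_
    constructor
    · intro hp
      rw [Prod.ext_iff] at hp
      exact ⟨by show W' ω = w; rw [← hW ω hp.1]; exact hp.2, hp.1⟩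
    · rintro ⟨hw', hz⟩
      rw [Prod.ext_iff]
      exact ⟨hz, by show W ω = w; rw [hW ω hz]; exact hw'⟩

end Assemble

end Aux

/-- Hybrid lemma: if `ε` bounds the expected conditional information between `A_t` and `B`
given `A_{g(z)}` (under `Z = z`, averaged over `t ← T|z`), and `δ` bounds the expected
statistical dependence of `T` on `(A,B)` given `Z`, then the expected statistical distance
between the joint of `(A_T, T, B)` and the corresponding product, conditioned on
`(Z, A_{g(Z)})`, is at most `2√ε + 2δ`. -/
theorem hybrid_lemma {Ω α β ζ : Type*} {n : ℕ}
    [Fintype Ω] [Fintype α] [Fintype β] [Fintype ζ]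
    (μ : Ω → ℝ) (hμ : IsPMF μ)
    (A : Ω → Fin n → α) (T : Ω → Finset (Fin n)) (B : Ω → β) (Z : Ω → ζ)
    (g : ζ → Finset (Fin n)) (ε δ : ℝ)
    (hε : ε = ∑ z : ζ, rvDist μ Z z *
        ∑ t : Finset (Fin n), condDist μ T Z z t *
          condMI (condMeas μ Z z) (fun ω => restr t (A ω)) B
            (fun ω => restr (g z) (A ω)))
    (hδ : δ = ∑ z : ζ, rvDist μ Z z *
        SD (condDist μ (fun ω => ((A ω, B ω), T ω)) Z z)
           (prodDist (condDist μ (fun ω => (A ω, B ω)) Z z) (condDist μ T Z z))) :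
    ∑ w : ζ × (Fin n → Option α),
        rvDist μ (fun ω => (Z ω, restr (g (Z ω)) (A ω))) w *
          SD (condDist μ (fun ω => ((restr (T ω) (A ω), T ω), B ω))
                (fun ω => (Z ω, restr (g (Z ω)) (A ω))) w)
             (prodDist
               (condDist μ (fun ω => (restr (T ω) (A ω), T ω))
                 (fun ω => (Z ω, restr (g (Z ω)) (A ω))) w)
               (condDist μ B (fun ω => (Z ω, restr (g (Z ω)) (A ω))) w))
      ≤ 2 * Real.sqrt ε + 2 * δ := by
  classical
  have hμ0 := hμ.1
  subst hε
  subst hδ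
  rw [Fintype.sum_prod_type]
  have hpz_nn : ∀ z, 0 ≤ rvDist μ Z z := fun z => rvDist_nonneg hμ0 Z z
  have hpz_sum : ∑ z, rvDist μ Z z = 1 := by rw [rvDist_sum]; exact hμ.2
  have εz_nonneg : ∀ z : ζ, 0 ≤ ∑ t : Finset (Fin n), condDist μ T Z z t *
      condMI (condMeas μ Z z) (fun ω => restr t (A ω)) B (fun ω => restr (g z) (A ω)) := by
    intro z
    rcases eq_or_ne (rvDist μ Z z) 0 with h0 | h0
    · refine Finset.sum_nonneg fun t _ => ?_
      rw [condDist_zero T Z z h0]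
      simp
    · exact Finset.sum_nonneg fun t _ => mul_nonneg (condDist_nonneg hμ0 T Z z t)
        (condMI_nonneg _ (condMeas_isPMF μ Z z hμ h0) _ _ _)
  have perz : ∀ z : ζ, ∑ a' : Fin n → Option α,
      rvDist μ (fun ω => (Z ω, restr (g (Z ω)) (A ω))) (z, a') *
        SD (condDist μ (fun ω => ((restr (T ω) (A ω), T ω), B ω))
              (fun ω => (Z ω, restr (g (Z ω)) (A ω))) (z, a'))
           (prodDist
             (condDist μ (fun ω => (restr (T ω) (A ω), T ω))
               (fun ω => (Z ω, restr (g (Z ω)) (A ω))) (z, a'))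
             (condDist μ B (fun ω => (Z ω, restr (g (Z ω)) (A ω))) (z, a')))
      ≤ rvDist μ Z z * (2 * Real.sqrt (∑ t : Finset (Fin n), condDist μ T Z z t *
            condMI (condMeas μ Z z) (fun ω => restr t (A ω)) B (fun ω => restr (g z) (A ω)))
          + 2 * SD (condDist μ (fun ω => ((A ω, B ω), T ω)) Z z)
              (prodDist (condDist μ (fun ω => (A ω, B ω)) Z z) (condDist μ T Z z))) := by
    intro z
    have hW : ∀ ω, Z ω = z → restr (g (Z ω)) (A ω) = restr (g z) (A ω) := by
      intro ω h
      rw [h]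
    have e : ∀ a' : Fin n → Option α,
        rvDist μ (fun ω => (Z ω, restr (g (Z ω)) (A ω))) (z, a') *
          SD (condDist μ (fun ω => ((restr (T ω) (A ω), T ω), B ω))
                (fun ω => (Z ω, restr (g (Z ω)) (A ω))) (z, a'))
             (prodDist
               (condDist μ (fun ω => (restr (T ω) (A ω), T ω))
                 (fun ω => (Z ω, restr (g (Z ω)) (A ω))) (z, a'))
               (condDist μ B (fun ω => (Z ω, restr (g (Z ω)) (A ω))) (z, a')))
        = rvDist μ Z z * (rvDist (condMeas μ Z z) (fun ω => restr (g z) (A ω)) a' *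
            SD (condDist (condMeas μ Z z) (fun ω => ((restr (T ω) (A ω), T ω), B ω))
                  (fun ω => restr (g z) (A ω)) a')
               (prodDist
                 (condDist (condMeas μ Z z) (fun ω => (restr (T ω) (A ω), T ω))
                   (fun ω => restr (g z) (A ω)) a')
                 (condDist (condMeas μ Z z) B (fun ω => restr (g z) (A ω)) a'))) := by
      intro a'
      rw [rvDist_pair_condMeas μ hμ0 Z z (fun ω => restr (g (Z ω)) (A ω))
          (fun ω => restr (g z) (A ω)) hW a',
        condDist_pair_condMeas μ hμ0 Z z (fun ω => ((restr (T ω) (A ω), T ω), B ω))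
          (fun ω => restr (g (Z ω)) (A ω)) (fun ω => restr (g z) (A ω)) hW a',
        condDist_pair_condMeas μ hμ0 Z z (fun ω => (restr (T ω) (A ω), T ω))
          (fun ω => restr (g (Z ω)) (A ω)) (fun ω => restr (g z) (A ω)) hW a',
        condDist_pair_condMeas μ hμ0 Z z B
          (fun ω => restr (g (Z ω)) (A ω)) (fun ω => restr (g z) (A ω)) hW a',
        mul_assoc]
    rw [Finset.sum_congr rfl fun a' _ => e a', ← Finset.mul_sum]
    rcases eq_or_ne (rvDist μ Z z) 0 with h0 | h0
    · rw [h0]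
      simp
    · refine mul_le_mul_of_nonneg_left ?_ (hpz_nn z)
      have hinner := per_z (condMeas μ Z z) (condMeas_isPMF μ Z z hμ h0) A T B (g z)
      rw [rvDist_condMeas μ Z z T,
        rvDist_condMeas μ Z z (fun ω => ((A ω, B ω), T ω)),
        rvDist_condMeas μ Z z (fun ω => (A ω, B ω))] at hinner
      exact hinner
  calc (∑ z : ζ, ∑ a' : Fin n → Option α,
      rvDist μ (fun ω => (Z ω, restr (g (Z ω)) (A ω))) (z, a') *
        SD (condDist μ (fun ω => ((restr (T ω) (A ω), T ω), B ω))
              (fun ω => (Z ω, restr (g (Z ω)) (A ω))) (z, a'))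
           (prodDist
             (condDist μ (fun ω => (restr (T ω) (A ω), T ω))
               (fun ω => (Z ω, restr (g (Z ω)) (A ω))) (z, a'))
             (condDist μ B (fun ω => (Z ω, restr (g (Z ω)) (A ω))) (z, a'))))
      ≤ ∑ z : ζ, rvDist μ Z z * (2 * Real.sqrt (∑ t : Finset (Fin n), condDist μ T Z z t *
            condMI (condMeas μ Z z) (fun ω => restr t (A ω)) B (fun ω => restr (g z) (A ω)))
          + 2 * SD (condDist μ (fun ω => ((A ω, B ω), T ω)) Z z)
              (prodDist (condDist μ (fun ω => (A ω, B ω)) Z z) (condDist μ T Z z))) :=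
        Finset.sum_le_sum fun z _ => perz z
    _ = 2 * (∑ z : ζ, rvDist μ Z z * Real.sqrt (∑ t : Finset (Fin n), condDist μ T Z z t *
            condMI (condMeas μ Z z) (fun ω => restr t (A ω)) B (fun ω => restr (g z) (A ω))))
        + 2 * (∑ z : ζ, rvDist μ Z z *
            SD (condDist μ (fun ω => ((A ω, B ω), T ω)) Z z)
              (prodDist (condDist μ (fun ω => (A ω, B ω)) Z z) (condDist μ T Z z))) := by
        rw [Finset.mul_sum, Finset.mul_sum, ← Finset.sum_add_distrib]
        exact Finset.sum_congr rfl fun z _ => by ring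
    _ ≤ 2 * Real.sqrt (∑ z : ζ, rvDist μ Z z * ∑ t : Finset (Fin n), condDist μ T Z z t *
            condMI (condMeas μ Z z) (fun ω => restr t (A ω)) B (fun ω => restr (g z) (A ω)))
        + 2 * (∑ z : ζ, rvDist μ Z z *
            SD (condDist μ (fun ω => ((A ω, B ω), T ω)) Z z)
              (prodDist (condDist μ (fun ω => (A ω, B ω)) Z z) (condDist μ T Z z))) := by
        refine add_le_add_left (mul_le_mul_of_nonneg_left ?_ (by norm_num : (0:ℝ) ≤ 2)) _
        calc ∑ z : ζ, rvDist μ Z z * Real.sqrt (∑ t : Finset (Fin n), condDist μ T Z z t *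
              condMI (condMeas μ Z z) (fun ω => restr t (A ω)) B (fun ω => restr (g z) (A ω)))
            = ∑ z : ζ, Real.sqrt (rvDist μ Z z)
                * Real.sqrt (rvDist μ Z z * ∑ t : Finset (Fin n), condDist μ T Z z t *
                  condMI (condMeas μ Z z) (fun ω => restr t (A ω)) B
                    (fun ω => restr (g z) (A ω))) := by
              refine Finset.sum_congr rfl fun z _ => ?_
              rw [Real.sqrt_mul (hpz_nn z), ← mul_assoc, Real.mul_self_sqrt (hpz_nn z)]
          _ ≤ Real.sqrt (∑ z : ζ, rvDist μ Z z)
              * Real.sqrt (∑ z : ζ, rvDist μ Z z * ∑ t : Finset (Fin n), condDist μ T Z z t *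
                  condMI (condMeas μ Z z) (fun ω => restr t (A ω)) B
                    (fun ω => restr (g z) (A ω))) :=
              Real.sum_sqrt_mul_sqrt_le _ (fun z => hpz_nn z)
                (fun z => mul_nonneg (hpz_nn z) (εz_nonneg z))
          _ = Real.sqrt (∑ z : ζ, rvDist μ Z z * ∑ t : Finset (Fin n), condDist μ T Z z t *
                  condMI (condMeas μ Z z) (fun ω => restr t (A ω)) B
                    (fun ω => restr (g z) (A ω))) := by
              rw [hpz_sum, Real.sqrt_one, one_mul]
    _ = 2 * Real.sqrt (∑ z : ζ, rvDist μ Z z * ∑ t : Finset (Fin n), condDist μ T Z z t *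
            condMI (condMeas μ Z z) (fun ω => restr t (A ω)) B (fun ω => restr (g z) (A ω)))
        + 2 * ∑ z : ζ, rvDist μ Z z *
            SD (condDist μ (fun ω => ((A ω, B ω), T ω)) Z z)
              (prodDist (condDist μ (fun ω => (A ω, B ω)) Z z) (condDist μ T Z z)) := rfl
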